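/- Chvátal–Erdős theorem: let G be a finite simple graph with at least 3 vertices and let k ≥ 1. Suppose that G is k-connected and that every independent set of G has at most k elements. Then G is Hamiltonian. -/

import Mathlib

open SimpleGraph Walk List

section CEhelpers

variable {V : Type*} {G : SimpleGraph V}

private lemma CE.reach {s : Set V} (h : (G.induce s).Connected) {x y : V}
    (hx : x ∈ s) (hy : y ∈ s) : ∃ w : G.Walk x y, ∀ z ∈ w.support, z ∈ s := by
  obtain ⟨W⟩ := h.preconnected ⟨x, hx⟩ ⟨y, hy⟩
  let f : G.induce s →g G := ⟨Subtype.val, fun {a b} hab => by simpa using hab⟩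
  refine ⟨W.map f, ?_⟩
  intro z hz
  rw [Walk.support_map] at hz
  obtain ⟨⟨z', hz'⟩, -, rfl⟩ := List.mem_map.mp hz
  exact hz'

private lemma CE.isPath_append {a b c' : V} {p : G.Walk a b} {q : G.Walk b c'}
    (hp : p.IsPath) (hq : q.IsPath) (hd : ∀ x ∈ p.support, x ∈ q.support → x = b) :
    (p.append q).IsPath := by
  rw [Walk.isPath_def, Walk.support_append, List.nodup_append]
  refine ⟨hp.support_nodup, hq.support_nodup.sublist (List.tail_sublist _), ?_⟩
  intro t htp s htq hts
  subst hts
  have ht : t = b := hd t htp (List.mem_of_mem_tail htq)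
  have h2 := hq.support_nodup
  rw [q.support_eq_cons, List.nodup_cons] at h2
  exact h2.1 (ht ▸ htq)

private lemma CE.mem_tail_of_closed {a : V} {p : G.Walk a a} (hp : ¬ p.Nil) :
    a ∈ p.support.tail := by
  obtain ⟨x, h, q, rfl⟩ := Walk.not_nil_iff.mp hp
  simpa using q.end_mem_support

private lemma CE.mem_support_iff_mem_tail {a : V} {p : G.Walk a a} (hp : ¬ p.Nil) (x : V) :
    x ∈ p.support ↔ x ∈ p.support.tail := by
  constructor
  · intro h
    rw [p.support_eq_cons, List.mem_cons] at h
    rcases h with rfl | h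
    · exact CE.mem_tail_of_closed hp
    · exact h
  · intro h
    exact List.mem_of_mem_tail h

private lemma CE.darts_map_fst_nodup {a : V} {c : G.Walk a a} (hc : c.IsCycle) :
    (c.darts.map (fun D : G.Dart => D.fst)).Nodup := by
  have happ := c.map_fst_darts_append
  have hnd := hc.support_nodup
  cases hxc : c.darts.map (fun D : G.Dart => D.fst) with
  | nil => simp
  | cons a' X' =>
    have h1 : (a' :: X') ++ [a] = a :: c.support.tail := by
      rw [← hxc]
      show c.darts.map (·.fst) ++ [a] = _
      rw [happ]
      exact c.support_eq_cons
    simp only [List.cons_append, List.cons.injEq] at h1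
    obtain ⟨rfl, htail⟩ := h1
    rw [← htail, List.nodup_append] at hnd
    rw [List.nodup_cons]
    exact ⟨fun h => hnd.2.2 a' h a' (by simp) rfl, hnd.1⟩

private lemma CE.darts_snd_injOn {a : V} {c : G.Walk a a} (hc : c.IsCycle) :
    ∀ D ∈ c.darts, ∀ D' ∈ c.darts, D.snd = D'.snd → D = D' := by
  have hn : (c.darts.map (fun D : G.Dart => D.snd)).Nodup := by
    rw [Walk.map_snd_darts]; exact hc.support_nodup
  exact fun D hD D' hD' h => List.inj_on_of_nodup_map hn hD hD' h

private lemma CE.darts_fst_injOn {a : V} {c : G.Walk a a} (hc : c.IsCycle) :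
    ∀ D ∈ c.darts, ∀ D' ∈ c.darts, D.fst = D'.fst → D = D' :=
  fun _ hD _ hD' h => List.inj_on_of_nodup_map (CE.darts_map_fst_nodup hc) hD hD' h

private lemma CE.glue_isCycle {u w w' y : V} {S : Set V}
    (huw : G.Adj u w) (hw'y : G.Adj w' y)
    (P : G.Walk w w') (R : G.Walk y u)
    (hP : P.IsPath) (hR : R.IsPath)
    (hPS : ∀ t ∈ P.support, t ∉ S) (hRS : ∀ t ∈ R.support, t ∈ S)
    (hu : u ∈ S) (hyu : y ≠ u) :
    (Walk.cons huw (P.append (Walk.cons hw'y R))).IsCycle := by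
  have hw'S : w' ∉ S := hPS w' P.end_mem_support
  have hwS : w ∉ S := hPS w P.start_mem_support
  rw [Walk.cons_isCycle_iff]
  constructor
  · apply CE.isPath_append hP
    · rw [Walk.cons_isPath_iff]
      exact ⟨hR, fun hmem => hw'S (hRS w' hmem)⟩
    · intro x hxP hxQ
      rw [Walk.support_cons, List.mem_cons] at hxQ
      rcases hxQ with rfl | hxR
      · rfl
      · exact absurd (hRS x hxR) (hPS x hxP)
  · intro hmem
    rw [Walk.edges_append, List.mem_append, Walk.edges_cons, List.mem_cons] at hmem
    rcases hmem with hmem | hmem | hmem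
    · exact (hPS u (P.fst_mem_support_of_mem_edges hmem)) hu
    · rw [Sym2.eq_iff] at hmem
      rcases hmem with ⟨h1, h2⟩ | ⟨h1, h2⟩
      · exact hw'S (h1 ▸ hu)
      · exact hyu h1.symm
    · exact hwS (hRS w (R.snd_mem_support_of_mem_edges hmem))

private lemma CE.glue_length {u w w' y : V}
    (huw : G.Adj u w) (hw'y : G.Adj w' y)
    (P : G.Walk w w') (R : G.Walk y u) :
    (Walk.cons huw (P.append (Walk.cons hw'y R))).length = P.length + R.length + 2 := by
  simp [Walk.length_cons, Walk.length_append]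
  omega

private lemma CE.rot [DecidableEq V] {a : V} {c : G.Walk a a} (hc : c.IsCycle) :
    ∀ u : V, ∃ z : V, u ∈ c.support →
      ∃ (h : G.Adj u z) (d : G.Walk z u), d.IsPath ∧
        ((⟨(u, z), h⟩ : G.Dart) ∈ c.darts) ∧
        (∀ D ∈ d.darts, D ∈ c.darts) ∧
        (∀ x ∈ d.support, x ∈ c.support) ∧
        (∀ x ∈ c.support, x = u ∨ x ∈ d.support) ∧
        d.length + 1 = c.length := by
  intro u
  by_cases hu : u ∈ c.support
  · have hr : (c.rotate u hu).IsCycle := hc.rotate hu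
    obtain ⟨z, h, d, hrd⟩ := Walk.not_nil_iff.mp hr.not_nil
    have hdarts : ∀ D : G.Dart, D ∈ (c.rotate u hu).darts ↔ D ∈ c.darts :=
      fun D => (Walk.rotate_darts c u hu).mem_iff
    have hsup : ∀ x : V, x ∈ (c.rotate u hu).support ↔ x ∈ c.support := by
      intro x
      rw [CE.mem_support_iff_mem_tail hr.not_nil, CE.mem_support_iff_mem_tail hc.not_nil]
      exact (Walk.support_rotate c u hu).mem_iff
    have hcyc' : (Walk.cons h d).IsCycle := hrd ▸ hr
    refine ⟨z, fun _ => ⟨h, d, ((Walk.cons_isCycle_iff d h).mp hcyc').1, ?_, ?_, ?_, ?_, ?_⟩⟩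
    · apply (hdarts _).mp
      rw [hrd, Walk.darts_cons]
      exact List.mem_cons_self
    · intro D hD
      apply (hdarts D).mp
      rw [hrd, Walk.darts_cons]
      exact List.mem_cons_of_mem _ hD
    · intro x hx
      apply (hsup x).mp
      rw [hrd, Walk.support_cons]
      exact List.mem_cons_of_mem _ hx
    · intro x hx
      have hx2 : x ∈ (c.rotate u hu).support := (hsup x).mpr hx
      rw [hrd, Walk.support_cons, List.mem_cons] at hx2
      exact hx2
    · have hlenr : (c.rotate u hu).length = c.length := by
        have h2 := congr_arg Walk.length (c.take_spec hu)
        rw [Walk.length_append] at h2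
        show ((c.dropUntil u hu).append (c.takeUntil u hu)).length = _
        rw [Walk.length_append]
        omega
      have h3 := congr_arg Walk.length hrd
      rw [Walk.length_cons] at h3
      omega
  · exact ⟨u, fun h => absurd h hu⟩

private lemma CE.exists_cycle [Fintype V] [DecidableEq V] [DecidableRel G.Adj]
    (hdeg : ∀ v : V, 2 ≤ G.degree v) (hconn : G.Connected) (hn : 3 ≤ Fintype.card V) :
    ∃ (a : V) (c : G.Walk a a), c.IsCycle := by
  by_contra hcyc
  push_neg at hcyc
  have hac : G.IsAcyclic := fun v c hc => hcyc v c hc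
  have htree : G.IsTree := ⟨hconn, hac⟩
  have hE := htree.card_edgeFinset
  have hsum := G.sum_degrees_eq_twice_card_edges
  have hge : Fintype.card V * 2 ≤ ∑ v : V, G.degree v := by
    have := Finset.card_nsmul_le_sum Finset.univ (fun v => G.degree v) 2 (fun v _ => hdeg v)
    simpa [Finset.card_univ, smul_eq_mul, mul_comm] using this
  rw [hsum] at hge
  omega

end CEhelpers

theorem chvatal_erdos_theorem
    {V : Type*} [Fintype V] [DecidableEq V] (G : SimpleGraph V) (k : ℕ)
    (hk : 1 ≤ k) (hn : 3 ≤ Fintype.card V)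
    (hcard : k < Fintype.card V)
    (hconn : ∀ S : Finset V, S.card < k → (G.induce ((↑S : Set V)ᶜ)).Connected)
    (hindep : ∀ s : Finset V, (∀ u ∈ s, ∀ v ∈ s, ¬ G.Adj u v) → s.card ≤ k) :
    G.IsHamiltonian := by
  classical
  haveI : DecidableRel G.Adj := Classical.decRel _
  -- G is connected
  have hGconn : G.Connected := by
    have hco := hconn ∅ (by simp; omega)
    rw [SimpleGraph.connected_iff]
    refine ⟨?_, Fintype.card_pos_iff.mp (by omega)⟩
    intro u v
    obtain ⟨W, -⟩ := CE.reach hco (x := u) (y := v) (by simp) (by simp)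
    exact W.reachable
  -- minimum degree at least 2
  have hdeg : ∀ v : V, 2 ≤ G.degree v := by
    intro v
    by_contra hlt
    push_neg at hlt
    rcases Nat.lt_or_ge k 2 with hk2 | hk2
    · -- k = 1 : G is complete
      have hadj : ∀ u : V, u ≠ v → G.Adj v u := by
        intro u hne
        by_contra hna
        have hind := hindep {v, u} ?_
        · rw [Finset.card_insert_of_notMem (by simp [Ne.symm hne]), Finset.card_singleton]
            at hind
          omega
        · intro x hx y hy
          simp only [Finset.mem_insert, Finset.mem_singleton] at hx hy
          rcases hx with rfl | rfl <;> rcases hy with rfl | rfl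
          · exact G.irrefl
          · exact hna
          · exact fun h => hna h.symm
          · exact G.irrefl
      obtain ⟨x, y, zz, hxy, hxz, hyz⟩ := (Fintype.two_lt_card_iff (α := V)).mp (by omega)
      have h2 : ∃ w₁ w₂ : V, w₁ ≠ w₂ ∧ w₁ ≠ v ∧ w₂ ≠ v := by
        by_cases hx : x = v
        · exact ⟨y, zz, hyz, fun h => hxy (hx ▸ h.symm ▸ rfl), fun h => hxz (hx ▸ h.symm ▸ rfl)⟩
        · by_cases hy : y = v
          · exact ⟨x, zz, hxz, hx, fun h => hyz (hy ▸ h.symm ▸ rfl)⟩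
          · exact ⟨x, y, hxy, hx, hy⟩
      obtain ⟨w₁, w₂, h12, h1v, h2v⟩ := h2
      have hlt2 : 1 < (G.neighborFinset v).card := by
        apply Finset.one_lt_card.mpr
        exact ⟨w₁, by rw [SimpleGraph.mem_neighborFinset]; exact hadj w₁ h1v,
          w₂, by rw [SimpleGraph.mem_neighborFinset]; exact hadj w₂ h2v, h12⟩
      rw [← SimpleGraph.card_neighborFinset_eq_degree] at hlt
      omega
    · -- k ≥ 2 : removing the ≤ 1 neighbors disconnects
      have hScard : (G.neighborFinset v).card < k := by
        rw [SimpleGraph.card_neighborFinset_eq_degree]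
        omega
      have hco := hconn (G.neighborFinset v) hScard
      have hv : v ∈ ((↑(G.neighborFinset v) : Set V)ᶜ) := by
        simp [SimpleGraph.mem_neighborFinset]
      have hexu : ∃ u : V, u ∉ G.neighborFinset v ∧ u ≠ v := by
        by_contra hcon
        push_neg at hcon
        have hsub : (Finset.univ : Finset V) ⊆ insert v (G.neighborFinset v) := by
          intro t _
          by_cases ht : t ∈ G.neighborFinset v
          · exact Finset.mem_insert_of_mem ht
          · rw [hcon t ht]; exact Finset.mem_insert_self _ _
        have h4 := Finset.card_le_card hsub
        rw [Finset.card_univ] at h4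
        have h5 := Finset.card_insert_le v (G.neighborFinset v)
        omega
      obtain ⟨u, huS, huv⟩ := hexu
      obtain ⟨W, hW⟩ := CE.reach hco hv (by simpa using huS)
      have hnil : ¬ W.Nil := Walk.not_nil_of_ne (Ne.symm huv)
      obtain ⟨x1, hadj, q, rfl⟩ := Walk.not_nil_iff.mp hnil
      have hx1 : x1 ∈ ((↑(G.neighborFinset v) : Set V)ᶜ) :=
        hW x1 (by rw [Walk.support_cons]; exact List.mem_cons_of_mem _ q.start_mem_support)
      apply hx1
      simp only [Finset.coe_sort_coe, Set.mem_compl_iff, Finset.mem_coe,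
        SimpleGraph.mem_neighborFinset, not_not] at hx1 ⊢
      exact hadj
  -- a longest cycle
  obtain ⟨a0, c0, hc0⟩ := CE.exists_cycle hdeg hGconn hn
  have hlenle : ∀ (b : V) (q : G.Walk b b), q.IsCycle → q.length ≤ Fintype.card V := by
    intro b q hq
    have h1 : q.support.tail.length = q.length := by
      rw [List.length_tail, Walk.length_support]
      omega
    have h2 := hq.support_nodup.length_le_card
    omega
  have hm : ∃ (b : V) (q : G.Walk b b), q.IsCycle ∧
      q.length = Nat.findGreatest
        (fun ℓ => ∃ (b : V) (q : G.Walk b b), q.IsCycle ∧ q.length = ℓ) (Fintype.card V) :=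
    Nat.findGreatest_spec
      (P := fun ℓ => ∃ (b : V) (q : G.Walk b b), q.IsCycle ∧ q.length = ℓ)
      (hlenle a0 c0 hc0) ⟨a0, c0, hc0, rfl⟩
  set m := Nat.findGreatest
      (fun ℓ => ∃ (b : V) (q : G.Walk b b), q.IsCycle ∧ q.length = ℓ) (Fintype.card V) with hmdef
  have hmax : ∀ (b : V) (q : G.Walk b b), q.IsCycle → q.length ≤ m := by
    intro b q hq
    exact Nat.le_findGreatest (hlenle b q hq) ⟨b, q, hq, rfl⟩
  obtain ⟨a, c, hc, hclen⟩ := hm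
  -- every vertex lies on c
  have hall : ∀ v : V, v ∈ c.support := by
    by_contra hno
    push_neg at hno
    obtain ⟨h0, hh0⟩ := hno
    -- the component K of h0 outside the cycle
    set K : Set V := {w | ∃ p : G.Walk h0 w, ∀ x ∈ p.support, x ∉ c.support} with hKdef
    have hh0K : h0 ∈ K := by
      refine ⟨Walk.nil, ?_⟩
      intro x hx
      simp only [Walk.support_nil, List.mem_singleton] at hx
      exact hx ▸ hh0
    have hKdisj : ∀ w ∈ K, w ∉ c.support := by
      rintro w ⟨p, hp⟩
      exact hp w p.end_mem_support
    have hKclose : ∀ w ∈ K, ∀ y : V, G.Adj w y → y ∉ c.support → y ∈ K := by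
      rintro w ⟨p, hp⟩ y hadj hy
      refine ⟨p.concat hadj, ?_⟩
      intro x hx
      rw [Walk.support_concat, List.mem_append] at hx
      rcases hx with hx | hx
      · exact hp x hx
      · rw [List.mem_singleton] at hx
        exact hx ▸ hy
    have hKpath : ∀ w ∈ K, ∀ w' ∈ K,
        ∃ P : G.Walk w w', P.IsPath ∧ ∀ t ∈ P.support, t ∉ c.support := by
      rintro w ⟨p, hp⟩ w' ⟨p', hp'⟩
      refine ⟨(p.reverse.append p').bypass, Walk.bypass_isPath _, ?_⟩
      intro t ht
      have ht2 := Walk.support_bypass_subset _ ht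
      rw [Walk.mem_support_append_iff] at ht2
      rcases ht2 with h | h
      · rw [Walk.support_reverse, List.mem_reverse] at h
        exact hp t h
      · exact hp' t h
    -- successor function along the cycle
    choose z hz using CE.rot hc
    have hzadj : ∀ u, u ∈ c.support → G.Adj u (z u) := by
      intro u hu
      obtain ⟨h, -⟩ := hz u hu
      exact h
    have hzsupp : ∀ u, u ∈ c.support → z u ∈ c.support := by
      intro u hu
      obtain ⟨h, d, -, -, -, hds, -, -⟩ := hz u hu
      exact hds (z u) d.start_mem_support
    have hzdart : ∀ u (hu : u ∈ c.support),
        ∃ h : G.Adj u (z u), (⟨(u, z u), h⟩ : G.Dart) ∈ c.darts := by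
      intro u hu
      obtain ⟨h, d, -, hD, -⟩ := hz u hu
      exact ⟨h, hD⟩
    -- the attachment set N
    set N : Finset V := Finset.univ.filter (fun u => u ∈ c.support ∧ ∃ w ∈ K, G.Adj u w)
      with hNdef
    have hNmem : ∀ u, u ∈ N ↔ (u ∈ c.support ∧ ∃ w ∈ K, G.Adj u w) := by
      intro u
      simp [hNdef]
    -- (A) the successor of an attachment vertex is not an attachment vertex
    have hA : ∀ u ∈ N, z u ∉ N := by
      intro u huN hzN
      rw [hNmem] at huN hzN
      obtain ⟨huS, w, hwK, huw⟩ := huN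
      obtain ⟨hzS, w', hw'K, hzw⟩ := hzN
      obtain ⟨h, d, hdP, hdD, hdDall, hdS, hdS', hdL⟩ := hz u huS
      obtain ⟨P, hPp, hPs⟩ := hKpath w hwK w' hw'K
      have hcycQ := CE.glue_isCycle (S := {t | t ∈ c.support}) huw hzw.symm P d hPp hdP
          (fun t ht => hPs t ht) (fun t ht => hdS t ht) huS h.ne'
      have hle := hmax _ _ hcycQ
      rw [CE.glue_length] at hle
      omega
    -- (B) injectivity of the successor map
    have hB : ∀ u ∈ N, ∀ u' ∈ N, z u = z u' → u = u' := by
      intro u huN u' hu'N heq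
      have huS := ((hNmem u).mp huN).1
      have hu'S := ((hNmem u').mp hu'N).1
      obtain ⟨h1, hD1⟩ := hzdart u huS
      obtain ⟨h2, hD2⟩ := hzdart u' hu'S
      have hDD := CE.darts_snd_injOn hc _ hD1 _ hD2 heq
      exact congrArg (fun D : G.Dart => D.fst) hDD
    -- (C) successors of attachment vertices are pairwise non-adjacent
    have hC : ∀ u ∈ N, ∀ u' ∈ N, u ≠ u' → ¬ G.Adj (z u) (z u') := by
      intro u huN u' hu'N hne hadj
      rw [hNmem] at huN hu'N
      obtain ⟨huS, w, hwK, huw⟩ := huN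
      obtain ⟨hu'S, w', hw'K, hu'w⟩ := hu'N
      obtain ⟨h, d, hdP, hdD, hdDall, hdS, hdS', hdL⟩ := hz u huS
      have hu'd : u' ∈ d.support := by
        rcases hdS' u' hu'S with h' | h'
        · exact absurd h' (Ne.symm hne)
        · exact h'
      have hspec : (d.takeUntil u' hu'd).append (d.dropUntil u' hu'd) = d := d.take_spec hu'd
      have hd1P : (d.takeUntil u' hu'd).IsPath := hdP.takeUntil hu'd
      have hd2P : (d.dropUntil u' hu'd).IsPath := hdP.dropUntil hu'd
      have hd2nil : ¬ (d.dropUntil u' hu'd).Nil := Walk.not_nil_of_ne (Ne.symm hne)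
      obtain ⟨x', h₂, e, hd₂e⟩ := Walk.not_nil_iff.mp hd2nil
      have hDx' : (⟨(u', x'), h₂⟩ : G.Dart) ∈ c.darts := by
        apply hdDall
        have hmem : (⟨(u', x'), h₂⟩ : G.Dart) ∈ (d.dropUntil u' hu'd).darts := by
          rw [hd₂e, Walk.darts_cons]
          exact List.mem_cons_self
        rw [← hspec, Walk.darts_append]
        exact List.mem_append_right _ hmem
      obtain ⟨h3, hD3⟩ := hzdart u' hu'S
      have hx'z : x' = z u' := congrArg (fun D : G.Dart => D.snd)
        (CE.darts_fst_injOn hc _ hDx' _ hD3 rfl)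
      subst hx'z
      -- build the long path R from u' to u
      have hdnodup := hdP.support_nodup
      rw [← hspec, Walk.support_append, List.nodup_append] at hdnodup
      have hetail : e.support = (d.dropUntil u' hu'd).support.tail := by
        rw [hd₂e, Walk.support_cons, List.tail_cons]
      have hzud₁ : z u ∈ (d.takeUntil u' hu'd).support := Walk.start_mem_support _
      have heP : e.IsPath := (hd₂e ▸ hd2P).of_cons
      have hzue : (z u) ∉ e.support := by
        intro hmem
        rw [hetail] at hmem
        exact hdnodup.2.2 (z u) hzud₁ (z u) hmem rfl
      have hRP : ((d.takeUntil u' hu'd).reverse.append (Walk.cons hadj e)).IsPath := by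
        apply CE.isPath_append hd1P.reverse
        · rw [Walk.cons_isPath_iff]
          exact ⟨heP, hzue⟩
        · intro t htr htc
          rw [Walk.support_reverse, List.mem_reverse] at htr
          rw [Walk.support_cons, List.mem_cons] at htc
          rcases htc with rfl | hte
          · rfl
          · exact (hdnodup.2.2 t htr t (hetail ▸ hte) rfl).elim
      have hRS : ∀ t ∈ ((d.takeUntil u' hu'd).reverse.append (Walk.cons hadj e)).support,
          t ∈ c.support := by
        intro t ht
        rw [Walk.mem_support_append_iff] at ht
        rcases ht with ht | ht
        · rw [Walk.support_reverse, List.mem_reverse] at ht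
          exact hdS t (Walk.support_takeUntil_subset d hu'd ht)
        · rw [Walk.support_cons, List.mem_cons] at ht
          rcases ht with rfl | ht
          · exact hdS _ d.start_mem_support
          · exact hdS t (Walk.support_dropUntil_subset d hu'd
              (List.mem_of_mem_tail (hetail ▸ ht)))
      have hRlen : ((d.takeUntil u' hu'd).reverse.append (Walk.cons hadj e)).length
          = d.length := by
        have h5 := congr_arg Walk.length hspec
        rw [Walk.length_append] at h5
        have h6 := congr_arg Walk.length hd₂e
        rw [Walk.length_cons] at h6
        rw [Walk.length_append, Walk.length_reverse, Walk.length_cons]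
        omega
      obtain ⟨P, hPp, hPs⟩ := hKpath w hwK w' hw'K
      have hcycQ := CE.glue_isCycle (S := {t | t ∈ c.support}) huw hu'w.symm P
          ((d.takeUntil u' hu'd).reverse.append (Walk.cons hadj e)) hPp hRP
          (fun t ht => hPs t ht) hRS huS (Ne.symm hne)
      have hle := hmax _ _ hcycQ
      rw [CE.glue_length] at hle
      omega
    -- the independent set {h0} ∪ z '' N
    have hS0ind : ∀ p ∈ insert h0 (N.image z), ∀ q ∈ insert h0 (N.image z), ¬ G.Adj p q := by
      intro p hp q hq
      simp only [Finset.mem_insert, Finset.mem_image] at hp hq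
      rcases hp with rfl | ⟨u, huN, rfl⟩
      · rcases hq with rfl | ⟨u, huN, rfl⟩
        · exact G.irrefl
        · intro hadj
          apply hA u huN
          rw [hNmem]
          exact ⟨hzsupp u ((hNmem u).mp huN).1, p, hh0K, hadj.symm⟩
      · rcases hq with rfl | ⟨u', hu'N, rfl⟩
        · intro hadj
          apply hA u huN
          rw [hNmem]
          exact ⟨hzsupp u ((hNmem u).mp huN).1, q, hh0K, hadj⟩
        · by_cases hequ : u = u'
          · subst hequ
            exact G.irrefl
          · exact hC u huN u' hu'N hequ
    have hcardS0 := hindep _ hS0ind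
    have hh0notim : h0 ∉ N.image z := by
      intro hmem
      obtain ⟨u, huN, hzu⟩ := Finset.mem_image.mp hmem
      exact hh0 (hzu ▸ hzsupp u ((hNmem u).mp huN).1)
    have hcardim : (N.image z).card = N.card :=
      Finset.card_image_of_injOn (fun u hu u' hu' hzz => hB u hu u' hu' hzz)
    rw [Finset.card_insert_of_notMem hh0notim, hcardim] at hcardS0
    -- N is a cutset of size < k separating K from the cycle : contradiction
    have hNcard : N.card < k := by omega
    have hcut := hconn N hNcard
    obtain ⟨z₀, hz₀S, hz₀N⟩ : ∃ t, t ∈ c.support ∧ t ∉ N := by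
      rcases N.eq_empty_or_nonempty with hNe | ⟨u₀, hu₀⟩
      · exact ⟨a, c.start_mem_support, by simp [hNe]⟩
      · exact ⟨z u₀, hzsupp u₀ ((hNmem u₀).mp hu₀).1, hA u₀ hu₀⟩
    have hh0N : h0 ∉ N := fun hmem => hh0 ((hNmem h0).mp hmem).1
    obtain ⟨W, hW⟩ := CE.reach hcut (x := h0) (y := z₀) (by simpa using hh0N)
      (by simpa using hz₀N)
    have hwalkK : ∀ (x y : V) (Wk : G.Walk x y), (∀ t ∈ Wk.support, t ∉ N) → x ∈ K → y ∈ K := by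
      intro x y Wk
      induction Wk with
      | nil => exact fun _ h => h
      | @cons x x₁ y hadj q ih =>
        intro hsup hxK
        apply ih
        · intro t ht
          exact hsup t (by rw [Walk.support_cons]; exact List.mem_cons_of_mem _ ht)
        · have hx₁N : x₁ ∉ N :=
            hsup x₁ (by rw [Walk.support_cons]; exact List.mem_cons_of_mem _ q.start_mem_support)
          by_cases hx₁c : x₁ ∈ c.support
          · exact absurd ((hNmem x₁).mpr ⟨hx₁c, x, hxK, hadj.symm⟩) hx₁N
          · exact hKclose x hxK x₁ hadj hx₁c
    have hz₀K := hwalkK h0 z₀ W (fun t ht => by simpa using hW t ht) hh0K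
    exact hKdisj z₀ hz₀K hz₀S

  -- conclude
  intro _
  refine ⟨a, c, SimpleGraph.Walk.isHamiltonianCycle_isCycle_and_isHamiltonian_tail.mpr
    ⟨hc, ?_⟩⟩
  have htail : c.tail.IsPath := by
    apply Walk.IsPath.mk'
    rw [Walk.support_tail_of_not_nil c hc.not_nil]
    exact hc.support_nodup
  apply htail.isHamiltonian_of_mem
  intro w
  rw [Walk.support_tail_of_not_nil c hc.not_nil]
  exact (CE.mem_support_iff_mem_tail hc.not_nil w).mp (hall w)
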